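/- For every θ ∈ (0,1) and every x ∈ (0,1): x·(1−x)^{(1−θ)/θ} < θ·(1−(1−x)^{1/θ}). Moreover, for θ = 1 and every x ∈ (0,1): x·(1−x)^{(1−θ)/θ} = θ·(1−(1−x)^{1/θ}) (both sides equal x). -/

import Mathlib

/-- Key analytic inequality behind oligopsony results: for `θ ∈ (0,1)` and
`x ∈ (0,1)`, `x·(1−x)^{(1−θ)/θ} < θ·(1−(1−x)^{1/θ})`, with equality (both
sides equal `x`) when `θ = 1`. -/
theorem stmt4 :
    (∀ θ ∈ Set.Ioo (0:ℝ) 1, ∀ x ∈ Set.Ioo (0:ℝ) 1,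
      x * (1 - x) ^ ((1 - θ) / θ) < θ * (1 - (1 - x) ^ (1 / θ))) ∧
    (∀ x ∈ Set.Ioo (0:ℝ) 1,
      x * (1 - x) ^ ((1 - (1:ℝ)) / 1) = 1 * (1 - (1 - x) ^ (1 / (1:ℝ)))) := by
  constructor
  · rintro θ ⟨hθ0, hθ1⟩ x ⟨hx0, hx1⟩
    set y : ℝ := 1 - x with hy
    have hy0 : 0 < y := by simp [hy]; linarith
    have hy1 : y < 1 := by simp [hy]; linarith
    set p : ℝ := 1 / θ with hp
    have hp1 : 1 < p := by
      rw [hp]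
      exact (one_lt_div hθ0).mpr hθ1
    have ht1 : 1 < y⁻¹ := (one_lt_inv₀ hy0).mpr hy1
    have hs : (0:ℝ) < y⁻¹ - 1 := by linarith
    -- Bernoulli: (y⁻¹)^p > 1 + p (y⁻¹ - 1)
    have hb : 1 + p * (y⁻¹ - 1) < (y⁻¹) ^ p := by
      have := one_add_mul_self_lt_rpow_one_add (s := y⁻¹ - 1) (by linarith) (ne_of_gt hs) hp1
      simpa using this
    have hyp : (0:ℝ) < y ^ p := Real.rpow_pos_of_pos hy0 p
    have hinv : (y⁻¹) ^ p = (y ^ p)⁻¹ := Real.inv_rpow hy0.le p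
    -- multiply both sides by y^p
    have key : (1 + p * (y⁻¹ - 1)) * y ^ p < 1 := by
      have := mul_lt_mul_of_pos_right hb hyp
      rwa [hinv, inv_mul_cancel₀ (ne_of_gt hyp)] at this
    have hexp : (1 - θ) / θ = p - 1 := by
      rw [hp, div_sub_one hθ0.ne']
    have hsub : y ^ (p - 1) = y ^ p / y := by
      rw [Real.rpow_sub hy0, Real.rpow_one]
    have hxy : x = 1 - y := by simp [hy]
    have hstep : x * y ^ ((1 - θ) / θ) = (y⁻¹ - 1) * y ^ p := by
      rw [hexp, hsub, hxy]
      field_simp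
    have hθp : θ * p = 1 := by rw [hp, mul_one_div_cancel hθ0.ne']
    -- target: x * y^((1-θ)/θ) < θ * (1 - y^p)
    rw [hstep]
    have hineq : p * ((y⁻¹ - 1) * y ^ p) < 1 - y ^ p := by nlinarith [key]
    have hfin := mul_lt_mul_of_pos_left hineq hθ0
    rw [← mul_assoc, mul_comm θ p, mul_comm p θ, hθp, one_mul] at hfin
    exact hfin
  · rintro x ⟨hx0, hx1⟩
    have h : (0:ℝ) < 1 - x := by linarith
    norm_num [Real.rpow_natCast]
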